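/- Let X be a compact metric space and f : X → X a continuous map. If U and U' are attracting neighborhoods, then U ∪ U' and U ∩ U' are attracting neighborhoods, and ω(U ∪ U') = ω(U) ∪ ω(U') and ω(U ∩ U') = Inv(ω(U) ∩ ω(U')). Consequently, if A and A' are attractors, then A ∪ A' and Inv(A ∩ A') are attractors. -/

import Mathlib

open Set

/-- The maximal invariant set in `U`: the union of all subsets `S ⊆ U` with `f '' S = S`. -/
def MaxInv {Y : Type*} (f : Y → Y) (U : Set Y) : Set Y :=
  ⋃₀ {S : Set Y | S ⊆ U ∧ f '' S = S}

/-- The maximal forward invariant set in `U`: the union of all subsets `S ⊆ U`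
with `f '' S ⊆ S`. -/
def MaxInvPlus {Y : Type*} (f : Y → Y) (U : Set Y) : Set Y :=
  ⋃₀ {S : Set Y | S ⊆ U ∧ f '' S ⊆ S}

/-- The omega-limit set `ω(U) = ⋂_{n ≥ 0} cl (⋃_{m ≥ n} f^[m] '' U)`. -/
def OmegaLim {Y : Type*} [TopologicalSpace Y] (f : Y → Y) (U : Set Y) : Set Y :=
  ⋂ n : ℕ, closure (⋃ m ≥ n, f^[m] '' U)

/-- The alpha-limit set `α(U) = ⋂_{n ≥ 0} cl (⋃_{m ≥ n} (f^[m]) ⁻¹' U)`. -/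
def AlphaLim {Y : Type*} [TopologicalSpace Y] (f : Y → Y) (U : Set Y) : Set Y :=
  ⋂ n : ℕ, closure (⋃ m ≥ n, f^[m] ⁻¹' U)

/-- A trapping region: a forward invariant set `U` with `f^[n] '' cl U ⊆ int U`
for some `n ≥ 1`. -/
def IsTrappingRegion {Y : Type*} [TopologicalSpace Y] (f : Y → Y) (U : Set Y) : Prop :=
  f '' U ⊆ U ∧ ∃ n : ℕ, 1 ≤ n ∧ f^[n] '' closure U ⊆ interior U

/-- An attractor: `A = Inv(U)` for some trapping region `U`. -/
def IsAttractor {Y : Type*} [TopologicalSpace Y] (f : Y → Y) (A : Set Y) : Prop :=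
  ∃ U : Set Y, IsTrappingRegion f U ∧ A = MaxInv f U

/-- An attracting neighborhood: `ω(U) ⊆ int U`. -/
def IsAttractingNbhd {Y : Type*} [TopologicalSpace Y] (f : Y → Y) (U : Set Y) : Prop :=
  OmegaLim f U ⊆ interior U

/-- A repelling region: a backward invariant set `U` with `(f^[n]) ⁻¹' cl U ⊆ int U`
for some `n ≥ 1`. -/
def IsRepellingRegion {Y : Type*} [TopologicalSpace Y] (f : Y → Y) (U : Set Y) : Prop :=
  f ⁻¹' U ⊆ U ∧ ∃ n : ℕ, 1 ≤ n ∧ f^[n] ⁻¹' closure U ⊆ interior U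

/-- A repeller: `R = Inv⁺(U)` for some repelling region `U`. -/
def IsRepeller {Y : Type*} [TopologicalSpace Y] (f : Y → Y) (R : Set Y) : Prop :=
  ∃ U : Set Y, IsRepellingRegion f U ∧ R = MaxInvPlus f U

/-- A repelling neighborhood: `α(U) ⊆ int U`. -/
def IsRepellingNbhd {Y : Type*} [TopologicalSpace Y] (f : Y → Y) (U : Set Y) : Prop :=
  AlphaLim f U ⊆ interior U

/-- A backward orbit: a sequence `γ : ℕ → Y` with `f (γ (k+1)) = γ k` for all `k`.
A backward orbit through `x` additionally satisfies `γ 0 = x`. -/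
def IsBackwardOrbit {Y : Type*} (f : Y → Y) (γ : ℕ → Y) : Prop :=
  ∀ k : ℕ, f (γ (k + 1)) = γ k

/-- The orbital alpha-limit set `α_o(γ) = ⋂_{n ≥ 0} cl {γ m : m ≥ n}`. -/
def OrbAlpha {Y : Type*} [TopologicalSpace Y] (γ : ℕ → Y) : Set Y :=
  ⋂ n : ℕ, closure (γ '' {m : ℕ | n ≤ m})

/-- The dual repeller of an attractor `A`: `A* = {x : ω(x) ∩ A = ∅}`. -/
def DualRepeller {Y : Type*} [TopologicalSpace Y] (f : Y → Y) (A : Set Y) : Set Y :=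
  {x : Y | OmegaLim f {x} ∩ A = ∅}

/-- The dual attractor of a repeller `R`:
`R* = {x : ∃ backward orbit γ through x with α_o(γ) ∩ R = ∅}`. -/
def DualAttractor {Y : Type*} [TopologicalSpace Y] (f : Y → Y) (R : Set Y) : Set Y :=
  {x : Y | ∃ γ : ℕ → Y, γ 0 = x ∧ IsBackwardOrbit f γ ∧ OrbAlpha γ ∩ R = ∅}
set_option linter.unusedSectionVars false

section Aux
variable {X : Type*} [MetricSpace X] [CompactSpace X] {f : X → X}

def omTail (f : X → X) (V : Set X) (n : ℕ) : Set X := ⋃ m ≥ n, f^[m] '' V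

lemma omegaLim_eq (f : X → X) (V : Set X) :
    OmegaLim f V = ⋂ n : ℕ, closure (omTail f V n) := rfl

lemma omTail_antitone (f : X → X) (V : Set X) : Antitone (omTail f V) := by
  intro n n' h x hx
  simp only [omTail, mem_iUnion] at hx ⊢
  obtain ⟨m, hm, hx⟩ := hx
  exact ⟨m, le_trans h hm, hx⟩

lemma omTail_mono (f : X → X) {V W : Set X} (h : V ⊆ W) (n : ℕ) :
    omTail f V n ⊆ omTail f W n := by
  intro x hx
  simp only [omTail, mem_iUnion] at hx ⊢
  obtain ⟨m, hm, hx⟩ := hx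
  exact ⟨m, hm, image_mono h hx⟩

lemma image_omTail (f : X → X) (V : Set X) (n : ℕ) :
    f '' omTail f V n = omTail f V (n + 1) := by
  unfold omTail
  calc f '' ⋃ m ≥ n, f^[m] '' V
      = ⋃ m ≥ n, f^[m + 1] '' V := by
        rw [image_iUnion]
        refine iUnion_congr fun m => ?_
        rw [image_iUnion]
        refine iUnion_congr fun _ => ?_
        rw [← image_comp, ← Function.iterate_succ']
    _ = ⋃ m ≥ n + 1, f^[m] '' V := by
        ext x
        simp only [mem_iUnion]
        constructor
        · rintro ⟨m, hm, hx⟩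
          exact ⟨m + 1, by omega, hx⟩
        · rintro ⟨m, hm, hx⟩
          exact ⟨m - 1, by omega, by rwa [show m - 1 + 1 = m by omega]⟩

lemma omegaLim_mono {V W : Set X} (h : V ⊆ W) : OmegaLim f V ⊆ OmegaLim f W := by
  intro x hx
  simp only [omegaLim_eq, mem_iInter] at hx ⊢
  exact fun n => closure_mono (omTail_mono f h n) (hx n)

lemma iInter_union_antitone_aux {a b : ℕ → Set X} (ha : Antitone a) (hb : Antitone b) :
    (⋂ n, (a n ∪ b n)) = (⋂ n, a n) ∪ (⋂ n, b n) := by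
  apply Subset.antisymm
  · intro x hx
    simp only [mem_iInter, mem_union] at hx
    by_contra h
    simp only [mem_union, mem_iInter, not_or, not_forall] at h
    obtain ⟨⟨N, hN⟩, ⟨M, hM⟩⟩ := h
    rcases hx (max N M) with h1 | h1
    · exact hN (ha (le_max_left N M) h1)
    · exact hM (hb (le_max_right N M) h1)
  · rintro x (hx | hx) <;> simp only [mem_iInter, mem_union] at hx ⊢
    · exact fun n => Or.inl (hx n)
    · exact fun n => Or.inr (hx n)

lemma omegaLim_union (f : X → X) (V W : Set X) :
    OmegaLim f (V ∪ W) = OmegaLim f V ∪ OmegaLim f W := by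
  have htail : ∀ n, omTail f (V ∪ W) n = omTail f V n ∪ omTail f W n := by
    intro n
    ext x
    simp only [omTail, image_union, mem_iUnion, mem_union]
    constructor
    · rintro ⟨m, hm, (hx | hx)⟩
      · exact Or.inl ⟨m, hm, hx⟩
      · exact Or.inr ⟨m, hm, hx⟩
    · rintro (⟨m, hm, hx⟩ | ⟨m, hm, hx⟩)
      · exact ⟨m, hm, Or.inl hx⟩
      · exact ⟨m, hm, Or.inr hx⟩
  calc OmegaLim f (V ∪ W) = ⋂ n, (closure (omTail f V n) ∪ closure (omTail f W n)) := by
        rw [omegaLim_eq]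
        exact iInter_congr fun n => by rw [htail n, closure_union]
    _ = OmegaLim f V ∪ OmegaLim f W :=
        iInter_union_antitone_aux
          (fun n n' h => closure_mono (omTail_antitone f V h))
          (fun n n' h => closure_mono (omTail_antitone f W h))

/-- Invariance of the omega-limit set (compactness + continuity). -/
lemma image_omegaLim (hf : Continuous f) (V : Set X) :
    f '' OmegaLim f V = OmegaLim f V := by
  have hclosed : ∀ n, IsClosed (closure (omTail f V n)) := fun n => isClosed_closure
  have hcpt : ∀ n, IsCompact (closure (omTail f V n)) := fun n => (hclosed n).isCompact
  have himg : ∀ n, closure (omTail f V (n + 1)) ⊆ f '' closure (omTail f V n) := by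
    intro n
    rw [← image_omTail]
    exact closure_minimal (image_mono (f := f) subset_closure)
      ((hcpt n).image hf).isClosed
  apply Subset.antisymm
  · rintro x ⟨y, hy, rfl⟩
    simp only [omegaLim_eq, mem_iInter] at hy ⊢
    intro n
    have : f y ∈ closure (f '' omTail f V n) :=
      (image_closure_subset_closure_image hf) (mem_image_of_mem f (hy n))
    rw [image_omTail] at this
    exact closure_mono (omTail_antitone f V (Nat.le_succ n)) this
  · intro x hx
    simp only [omegaLim_eq, mem_iInter] at hx
    set K : ℕ → Set X := fun n => f ⁻¹' {x} ∩ closure (omTail f V n) with hK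
    have hKne : ∀ n, (K n).Nonempty := by
      intro n
      obtain ⟨y, hy, hyx⟩ := himg n (hx (n + 1))
      exact ⟨y, hyx, hy⟩
    have hKcl : ∀ n, IsClosed (K n) :=
      fun n => (isClosed_singleton.preimage hf).inter (hclosed n)
    have hKanti : Antitone K := fun n n' h =>
      inter_subset_inter_right _ (closure_mono (omTail_antitone f V h))
    obtain ⟨y, hy⟩ := IsCompact.nonempty_iInter_of_directed_nonempty_isCompact_isClosed K
      (hKanti.directed_ge) hKne (fun n => (hKcl n).isCompact) hKcl
    simp only [mem_iInter, hK, mem_inter_iff, mem_preimage, mem_singleton_iff] at hy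
    exact ⟨y, by simp only [omegaLim_eq, mem_iInter]; exact fun n => (hy n).2, (hy 0).1⟩

/-- Any invariant subset of `V` lies in `ω(V)`. -/
lemma invariant_subset_omegaLim {S V : Set X} (hSV : S ⊆ V) (hinv : f '' S = S) :
    S ⊆ OmegaLim f V := by
  have hiter : ∀ m, f^[m] '' S = S := by
    intro m
    induction m with
    | zero => simp
    | succ k ih => rw [Function.iterate_succ', image_comp, ih, hinv]
  intro x hx
  simp only [omegaLim_eq, mem_iInter]
  intro n
  apply subset_closure
  simp only [omTail, mem_iUnion]
  refine ⟨n, le_rfl, ?_⟩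
  rw [← hiter n] at hx
  exact image_mono hSV hx

lemma maxInv_subset_omegaLim (f : X → X) (V : Set X) : MaxInv f V ⊆ OmegaLim f V := by
  rintro x ⟨S, ⟨hSV, hinv⟩, hx⟩
  exact invariant_subset_omegaLim hSV hinv hx

lemma omegaLim_inter (hf : Continuous f) {V W : Set X}
    (hV : OmegaLim f V ⊆ V) (hW : OmegaLim f W ⊆ W) :
    OmegaLim f (V ∩ W) = MaxInv f (OmegaLim f V ∩ OmegaLim f W) := by
  apply Subset.antisymm
  · intro x hx
    exact ⟨OmegaLim f (V ∩ W),
      ⟨subset_inter (omegaLim_mono inter_subset_left) (omegaLim_mono inter_subset_right),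
        image_omegaLim hf _⟩, hx⟩
  · rintro x ⟨S, ⟨hS, hinv⟩, hx⟩
    refine invariant_subset_omegaLim ?_ hinv hx
    exact fun y hy => ⟨hV (hS hy).1, hW (hS hy).2⟩

lemma iterate_image_omegaLim (hf : Continuous f) (V : Set X) (n : ℕ) :
    f^[n] '' OmegaLim f V = OmegaLim f V := by
  induction n with
  | zero => simp
  | succ k ih => rw [Function.iterate_succ', image_comp, ih, image_omegaLim hf]

/-- Iterates of a trapping region's closure eventually stay in the interior. -/
lemma trapping_iterates (hf : Continuous f) {V : Set X} (hV : IsTrappingRegion f V) :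
    ∃ n : ℕ, 1 ≤ n ∧ ∀ m, n ≤ m → f^[m] '' closure V ⊆ interior V := by
  obtain ⟨hfwd, n, hn1, hn⟩ := hV
  have hcl : ∀ k, f^[k] '' closure V ⊆ closure V := by
    intro k
    induction k with
    | zero => simp
    | succ j ih =>
        rw [Function.iterate_succ', image_comp]
        refine subset_trans (image_mono (f := f) ih) ?_
        calc f '' closure V ⊆ closure (f '' V) := image_closure_subset_closure_image hf
          _ ⊆ closure V := closure_mono hfwd
  refine ⟨n, hn1, fun m hm => ?_⟩
  obtain ⟨k, rfl⟩ : ∃ k, m = n + k := ⟨m - n, by omega⟩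
  rw [Function.iterate_add, image_comp]
  exact subset_trans (image_mono (hcl k)) hn

lemma trapping_omegaLim_subset (hf : Continuous f) {V : Set X} (hV : IsTrappingRegion f V) :
    OmegaLim f V ⊆ interior V := by
  obtain ⟨n, hn1, hiter⟩ := trapping_iterates hf hV
  have hsub : OmegaLim f V ⊆ closure V := by
    intro x hx
    simp only [omegaLim_eq, mem_iInter] at hx
    refine closure_mono ?_ (hx n)
    intro y hy
    simp only [omTail, mem_iUnion] at hy
    obtain ⟨m, hm, hy⟩ := hy
    exact interior_subset (hiter m hm (image_mono subset_closure hy))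
  calc OmegaLim f V = f^[n] '' OmegaLim f V := (iterate_image_omegaLim hf V n).symm
    _ ⊆ f^[n] '' closure V := image_mono hsub
    _ ⊆ interior V := hiter n le_rfl

/-- For a trapping region, `MaxInv = ω`. -/
lemma trapping_maxInv_eq_omegaLim (hf : Continuous f) {V : Set X}
    (hV : IsTrappingRegion f V) : MaxInv f V = OmegaLim f V := by
  apply Subset.antisymm (maxInv_subset_omegaLim f V)
  intro x hx
  exact ⟨OmegaLim f V,
    ⟨subset_trans (trapping_omegaLim_subset hf hV) interior_subset, image_omegaLim hf V⟩, hx⟩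

lemma trapping_union (hf : Continuous f) {V W : Set X}
    (hV : IsTrappingRegion f V) (hW : IsTrappingRegion f W) :
    IsTrappingRegion f (V ∪ W) := by
  obtain ⟨n, hn1, hVn⟩ := trapping_iterates hf hV
  obtain ⟨n', hn1', hWn⟩ := trapping_iterates hf hW
  refine ⟨by rw [image_union]; exact union_subset_union hV.1 hW.1,
    max n n', le_trans hn1 (le_max_left _ _), ?_⟩
  rw [closure_union, image_union]
  apply union_subset
  · exact subset_trans (hVn _ (le_max_left _ _))
      (interior_mono subset_union_left)
  · exact subset_trans (hWn _ (le_max_right _ _))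
      (interior_mono subset_union_right)

lemma trapping_inter (hf : Continuous f) {V W : Set X}
    (hV : IsTrappingRegion f V) (hW : IsTrappingRegion f W) :
    IsTrappingRegion f (V ∩ W) := by
  obtain ⟨n, hn1, hVn⟩ := trapping_iterates hf hV
  obtain ⟨n', hn1', hWn⟩ := trapping_iterates hf hW
  refine ⟨subset_inter (subset_trans (image_mono (f := f) inter_subset_left) hV.1)
      (subset_trans (image_mono (f := f) inter_subset_right) hW.1),
    max n n', le_trans hn1 (le_max_left _ _), ?_⟩
  rw [interior_inter]
  apply subset_inter
  · exact subset_trans (image_mono (closure_mono inter_subset_left))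
      (hVn _ (le_max_left _ _))
  · exact subset_trans (image_mono (closure_mono inter_subset_right))
      (hWn _ (le_max_right _ _))

end Aux

/-- Attracting neighborhoods form a lattice and `ω` respects the
lattice operations; consequently attractors form a lattice. -/
theorem attractingNbhd_lattice
    {X : Type*} [MetricSpace X] [CompactSpace X]
    (f : X → X) (hf : Continuous f) (U U' : Set X)
    (hU : IsAttractingNbhd f U) (hU' : IsAttractingNbhd f U') :
    IsAttractingNbhd f (U ∪ U') ∧ IsAttractingNbhd f (U ∩ U') ∧
    OmegaLim f (U ∪ U') = OmegaLim f U ∪ OmegaLim f U' ∧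
    OmegaLim f (U ∩ U') = MaxInv f (OmegaLim f U ∩ OmegaLim f U') ∧
    (∀ A A' : Set X, IsAttractor f A → IsAttractor f A' →
      IsAttractor f (A ∪ A') ∧ IsAttractor f (MaxInv f (A ∩ A'))) := by
  have h3 : OmegaLim f (U ∪ U') = OmegaLim f U ∪ OmegaLim f U' := omegaLim_union f U U'
  have h4 : OmegaLim f (U ∩ U') = MaxInv f (OmegaLim f U ∩ OmegaLim f U') :=
    omegaLim_inter hf (subset_trans hU interior_subset) (subset_trans hU' interior_subset)
  refine ⟨?_, ?_, h3, h4, ?_⟩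
  · rw [IsAttractingNbhd, h3]
    exact union_subset (subset_trans hU (interior_mono subset_union_left))
      (subset_trans hU' (interior_mono subset_union_right))
  · intro x hx
    rw [interior_inter]
    exact ⟨hU (omegaLim_mono inter_subset_left hx), hU' (omegaLim_mono inter_subset_right hx)⟩
  · rintro A A' ⟨V, hV, rfl⟩ ⟨V', hV', rfl⟩
    have hAV : MaxInv f V = OmegaLim f V := trapping_maxInv_eq_omegaLim hf hV
    have hAV' : MaxInv f V' = OmegaLim f V' := trapping_maxInv_eq_omegaLim hf hV'
    constructor
    · refine ⟨V ∪ V', trapping_union hf hV hV', ?_⟩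
      rw [trapping_maxInv_eq_omegaLim hf (trapping_union hf hV hV'), omegaLim_union, hAV, hAV']
    · refine ⟨V ∩ V', trapping_inter hf hV hV', ?_⟩
      rw [trapping_maxInv_eq_omegaLim hf (trapping_inter hf hV hV'), hAV, hAV',
        omegaLim_inter hf (subset_trans (trapping_omegaLim_subset hf hV) interior_subset)
          (subset_trans (trapping_omegaLim_subset hf hV') interior_subset)]
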